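/- Pointwise covariance of the lapse-Wick-rotated ADM metric under foliation-changing diffeomorphisms (Proposition 1, matrix form): let θ ∈ ℝ, let (N, n, ĝ) be real ADM data, let J be a Jacobian, and assume D_θ² ≠ 0, so the lapse-Wick-rotated primed triple (λ'_θ, n'_θ, ĝ'^θ) is defined. Then Jᵀ · A(−1, λ'_θ, n'_θ, ĝ'^θ) · J = A(−1, e^{−2iθ}N², n, ĝ), where J is regarded as a complex matrix. In words: the complex metric obtained by applying the Wick rotation N ↦ e^{−iθ}N in a fiducial foliation and then transporting the ADM triple to a new foliation by the (complexified, signature −) transformation law represents the same complex bilinear form as the Wick-rotated metric in the fiducial foliation. -/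
import Mathlib


open Matrix Complex BigOperators

noncomputable section

/-- The ADM matrix `A(ε, λ, n, ĝ)` representing the line element
`ε λ dt² + ĝ_{ab}(dx^a + n^a dt)(dx^b + n^b dt)`. -/
def ADM {R : Type*} [CommRing R] {d : ℕ} (ε lam : R) (n : Fin d → R)
    (g : Matrix (Fin d) (Fin d) R) : Matrix (Fin (d+1)) (Fin (d+1)) R :=
  Matrix.of fun i j =>
    Fin.cases
      (Fin.cases (ε * lam + ∑ a, ∑ b, g a b * n a * n b)
        (fun a => ∑ b, g a b * n b) j)
      (fun a => Fin.cases (∑ b, g a b * n b) (fun b => g a b) j) i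

variable {d : ℕ}

/-- Block `τ = ∂t'/∂t` of a Jacobian. -/
def tauJ (J : Matrix (Fin (d+1)) (Fin (d+1)) ℝ) : ℝ := J 0 0

/-- Block `σ_c = ∂t'/∂x^c` of a Jacobian. -/
def sigJ (J : Matrix (Fin (d+1)) (Fin (d+1)) ℝ) : Fin d → ℝ := fun c => J 0 c.succ

/-- Block `ρ^a = ∂x'^a/∂t` of a Jacobian. -/
def rhoJ (J : Matrix (Fin (d+1)) (Fin (d+1)) ℝ) : Fin d → ℝ := fun a => J a.succ 0

/-- Block `X^a_c = ∂x'^a/∂x^c` of a Jacobian. -/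
def XJ (J : Matrix (Fin (d+1)) (Fin (d+1)) ℝ) : Matrix (Fin d) (Fin d) ℝ :=
  Matrix.of fun a c => J a.succ c.succ

/-- Block `k_a = (J⁻¹)₀ₐ` of the inverse Jacobian. -/
def kJ (J : Matrix (Fin (d+1)) (Fin (d+1)) ℝ) : Fin d → ℝ := fun a => J⁻¹ 0 a.succ

/-- Block `K^c_a = (J⁻¹)_{ca}` of the inverse Jacobian. -/
def KJ (J : Matrix (Fin (d+1)) (Fin (d+1)) ℝ) : Matrix (Fin d) (Fin d) ℝ :=
  Matrix.of fun c a => J⁻¹ c.succ a.succ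

/-- `C = τ - Σ_c σ_c n^c`. -/
def CJ (J : Matrix (Fin (d+1)) (Fin (d+1)) ℝ) (n : Fin d → ℝ) : ℝ :=
  tauJ J - ∑ c, sigJ J c * n c

/-- `σᵀ ĝ⁻¹ σ`. -/
def sgsJ (J : Matrix (Fin (d+1)) (Fin (d+1)) ℝ) (g : Matrix (Fin d) (Fin d) ℝ) : ℝ :=
  ∑ c, ∑ e, sigJ J c * g⁻¹ c e * sigJ J e

/-- `(X ĝ⁻¹ σ)^a`. -/
def Xgs (J : Matrix (Fin (d+1)) (Fin (d+1)) ℝ) (g : Matrix (Fin d) (Fin d) ℝ) :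
    Fin d → ℝ := fun a => ∑ c, ∑ e, XJ J a c * g⁻¹ c e * sigJ J e

/-- `(ρ - X n)^a`. -/
def rXn (J : Matrix (Fin (d+1)) (Fin (d+1)) ℝ) (n : Fin d → ℝ) : Fin d → ℝ :=
  fun a => rhoJ J a - ∑ c, XJ J a c * n c

/-- `D_ε² = C² + ε N² σᵀĝ⁻¹σ`. -/
def Deps2 (J : Matrix (Fin (d+1)) (Fin (d+1)) ℝ) (ε N : ℝ) (n : Fin d → ℝ)
    (g : Matrix (Fin d) (Fin d) ℝ) : ℝ :=
  (CJ J n)^2 + ε * N^2 * sgsJ J g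

/-- transf_ε primed squared lapse `N'² = N²/D_ε²`. -/
def NP2 (J : Matrix (Fin (d+1)) (Fin (d+1)) ℝ) (ε N : ℝ) (n : Fin d → ℝ)
    (g : Matrix (Fin d) (Fin d) ℝ) : ℝ := N^2 / Deps2 J ε N n g

/-- transf_ε primed shift `n'^a`. -/
def shiftP (J : Matrix (Fin (d+1)) (Fin (d+1)) ℝ) (ε N : ℝ) (n : Fin d → ℝ)
    (g : Matrix (Fin d) (Fin d) ℝ) : Fin d → ℝ := fun a =>
  -((rXn J n a) * CJ J n + ε * N^2 * Xgs J g a) / Deps2 J ε N n g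

/-- transf_ε primed spatial metric `ĝ'_{ab}`. -/
def ghP (J : Matrix (Fin (d+1)) (Fin (d+1)) ℝ) (ε N : ℝ) (n : Fin d → ℝ)
    (g : Matrix (Fin d) (Fin d) ℝ) : Matrix (Fin d) (Fin d) ℝ :=
  Matrix.of fun a b =>
    (∑ c, ∑ e, (KJ J c a + kJ J a * n c) * (KJ J e b + kJ J b * n e) * g c e)
    + ε * N^2 * kJ J a * kJ J b

/-- The Wick phase `e^{-2iθ}`. -/
def wick (θ : ℝ) : ℂ := Complex.exp (-2 * Complex.I * θ)

/-- `D_θ² = C² - e^{-2iθ} N² σᵀĝ⁻¹σ`. -/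
def Dth2 (J : Matrix (Fin (d+1)) (Fin (d+1)) ℝ) (θ N : ℝ) (n : Fin d → ℝ)
    (g : Matrix (Fin d) (Fin d) ℝ) : ℂ :=
  (CJ J n : ℂ)^2 - wick θ * (N:ℂ)^2 * (sgsJ J g : ℂ)

/-- lapse-Wick-rotated primed squared lapse `λ'_θ = e^{-2iθ}N²/D_θ²`. -/
def lamW (J : Matrix (Fin (d+1)) (Fin (d+1)) ℝ) (θ N : ℝ) (n : Fin d → ℝ)
    (g : Matrix (Fin d) (Fin d) ℝ) : ℂ :=
  wick θ * (N:ℂ)^2 / Dth2 J θ N n g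

/-- lapse-Wick-rotated primed shift `n'_θ{}^a`. -/
def shiftW (J : Matrix (Fin (d+1)) (Fin (d+1)) ℝ) (θ N : ℝ) (n : Fin d → ℝ)
    (g : Matrix (Fin d) (Fin d) ℝ) : Fin d → ℂ := fun a =>
  -((rXn J n a : ℂ) * (CJ J n : ℂ) - wick θ * (N:ℂ)^2 * (Xgs J g a : ℂ)) / Dth2 J θ N n g

/-- lapse-Wick-rotated primed spatial metric `(ĝ'^θ)_{ab}`. -/
def ghW (J : Matrix (Fin (d+1)) (Fin (d+1)) ℝ) (θ N : ℝ) (n : Fin d → ℝ)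
    (g : Matrix (Fin d) (Fin d) ℝ) : Matrix (Fin d) (Fin d) ℂ :=
  Matrix.of fun a b =>
    ((∑ c, ∑ e, (KJ J c a + kJ J a * n c) * (KJ J e b + kJ J b * n e) * g c e : ℝ) : ℂ)
    - wick θ * (N:ℂ)^2 * (kJ J a : ℂ) * (kJ J b : ℂ)


namespace LWCaux

variable {d : ℕ} (J : Matrix (Fin (d+1)) (Fin (d+1)) ℝ) (θ N : ℝ) (n : Fin d → ℝ)
  (g : Matrix (Fin d) (Fin d) ℝ)

/-- complexified blocks -/
def tc : ℂ := tauJ J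
def sv : Fin d → ℂ := fun c => sigJ J c
def rv : Fin d → ℂ := fun a => rhoJ J a
def Xc : Fin d → Fin d → ℂ := fun a c => XJ J a c
def kv : Fin d → ℂ := fun a => kJ J a
def Km : Fin d → Fin d → ℂ := fun c a => KJ J c a
def al : ℂ := J⁻¹ 0 0
def bv : Fin d → ℂ := fun c => J⁻¹ c.succ 0
def nc : Fin d → ℂ := fun a => n a
def gm : Fin d → Fin d → ℂ := fun a b => g a b
def gi : Fin d → Fin d → ℂ := fun a b => (g⁻¹ : Matrix (Fin d) (Fin d) ℝ) a b
def Cc : ℂ := CJ J n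
def sg : ℂ := sgsJ J g
def mv : Fin d → ℂ := fun a => rXn J n a
def xg : Fin d → ℂ := fun a => Xgs J g a
def Pt : Fin d → Fin d → ℂ := fun c a => Km J c a + kv J a * nc n c
def mu : Fin d → ℂ := fun c => al J * nc n c + bv J c

-- cast lemmas
lemma hCc : Cc J n = tc J - ∑ c, sv J c * nc n c := by
  simp only [Cc, CJ, tc, sv, nc]; push_cast; rfl

lemma hsg : sg J g = ∑ c, ∑ e, sv J c * gi g c e * sv J e := by
  simp only [sg, sgsJ, sv, gi]; push_cast; rfl

lemma hmv (a : Fin d) : mv J n a = rv J a - ∑ c, Xc J a c * nc n c := by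
  simp only [mv, rXn, rv, Xc, nc]; push_cast; rfl

lemma hxg (a : Fin d) : xg J g a = ∑ c, ∑ e, Xc J a c * gi g c e * sv J e := by
  simp only [xg, Xgs, Xc, gi, sv]; push_cast; rfl

lemma hD2 : Dth2 J θ N n g = (Cc J n)^2 - wick θ * (N:ℂ)^2 * sg J g := by
  simp only [Dth2, Cc, sg]

-- relations from J * J⁻¹ = 1
lemma r3 (hJ : IsUnit J.det) : tc J * al J + ∑ c, sv J c * bv J c = 1 := by
  have h2 := congrFun (congrFun (Matrix.mul_nonsing_inv J hJ) 0) 0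
  rw [Matrix.mul_apply, Fin.sum_univ_succ, Matrix.one_apply_eq] at h2
  have : ((J 0 0 * J⁻¹ 0 0 + ∑ c : Fin d, J 0 c.succ * J⁻¹ c.succ 0 : ℝ) : ℂ) = 1 := by
    rw [h2]; norm_num
  push_cast at this; exact this

lemma r4 (hJ : IsUnit J.det) (b : Fin d) : tc J * kv J b + ∑ c, sv J c * Km J c b = 0 := by
  have h2 := congrFun (congrFun (Matrix.mul_nonsing_inv J hJ) 0) b.succ
  rw [Matrix.mul_apply, Fin.sum_univ_succ] at h2
  rw [Matrix.one_apply_ne (Fin.succ_ne_zero b).symm] at h2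
  have : ((J 0 0 * J⁻¹ 0 b.succ + ∑ c : Fin d, J 0 c.succ * J⁻¹ c.succ b.succ : ℝ) : ℂ) = 0 := by
    rw [h2]; norm_num
  push_cast at this; exact this

lemma r5 (hJ : IsUnit J.det) (a : Fin d) : rv J a * al J + ∑ c, Xc J a c * bv J c = 0 := by
  have h2 := congrFun (congrFun (Matrix.mul_nonsing_inv J hJ) a.succ) 0
  rw [Matrix.mul_apply, Fin.sum_univ_succ] at h2
  rw [Matrix.one_apply_ne (Fin.succ_ne_zero a)] at h2
  have : ((J a.succ 0 * J⁻¹ 0 0 + ∑ c : Fin d, J a.succ c.succ * J⁻¹ c.succ 0 : ℝ) : ℂ) = 0 := by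
    rw [h2]; norm_num
  push_cast at this; exact this

lemma r6 (hJ : IsUnit J.det) (a b : Fin d) :
    rv J a * kv J b + ∑ c, Xc J a c * Km J c b = if a = b then 1 else 0 := by
  have h2 := congrFun (congrFun (Matrix.mul_nonsing_inv J hJ) a.succ) b.succ
  rw [Matrix.mul_apply, Fin.sum_univ_succ, Matrix.one_apply] at h2
  by_cases h : a = b
  · subst h
    rw [if_pos rfl] at h2
    rw [if_pos rfl]
    have : ((J a.succ 0 * J⁻¹ 0 a.succ + ∑ c : Fin d, J a.succ c.succ * J⁻¹ c.succ a.succ : ℝ) : ℂ)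
        = 1 := by rw [h2]; norm_num
    push_cast at this; exact this
  · rw [if_neg (fun hs => h (Fin.succ_inj.mp hs))] at h2
    rw [if_neg h]
    have : ((J a.succ 0 * J⁻¹ 0 b.succ + ∑ c : Fin d, J a.succ c.succ * J⁻¹ c.succ b.succ : ℝ) : ℂ)
        = 0 := by rw [h2]; norm_num
    push_cast at this; exact this

-- relations from J⁻¹ * J = 1
lemma r1 (hJ : IsUnit J.det) : al J * tc J + ∑ a, kv J a * rv J a = 1 := by
  have h2 := congrFun (congrFun (Matrix.nonsing_inv_mul J hJ) 0) 0
  rw [Matrix.mul_apply, Fin.sum_univ_succ, Matrix.one_apply_eq] at h2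
  have : ((J⁻¹ 0 0 * J 0 0 + ∑ c : Fin d, J⁻¹ 0 c.succ * J c.succ 0 : ℝ) : ℂ) = 1 := by
    rw [h2]; norm_num
  push_cast at this; exact this

lemma r2 (hJ : IsUnit J.det) (c : Fin d) : al J * sv J c + ∑ a, kv J a * Xc J a c = 0 := by
  have h2 := congrFun (congrFun (Matrix.nonsing_inv_mul J hJ) 0) c.succ
  rw [Matrix.mul_apply, Fin.sum_univ_succ] at h2
  rw [Matrix.one_apply_ne (Fin.succ_ne_zero c).symm] at h2
  have : ((J⁻¹ 0 0 * J 0 c.succ + ∑ a : Fin d, J⁻¹ 0 a.succ * J a.succ c.succ : ℝ) : ℂ) = 0 := by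
    rw [h2]; norm_num
  push_cast at this; exact this


-- sum manipulation helper
lemma sum_swap_mul (f h : Fin d → ℂ) (M : Fin d → Fin d → ℂ) :
    (∑ a, f a * ∑ c, M a c * h c) = ∑ c, (∑ a, f a * M a c) * h c := by
  simp_rw [Finset.mul_sum, Finset.sum_mul]
  rw [Finset.sum_comm]
  exact Finset.sum_congr rfl fun c _ => Finset.sum_congr rfl fun a _ => (mul_assoc _ _ _).symm

lemma gdet (hg : g.PosDef) : IsUnit g.det := isUnit_iff_ne_zero.mpr hg.det_pos.ne'

lemma ginv (hg : g.PosDef) (c f : Fin d) :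
    ∑ e, gm g c e * gi g e f = if c = f then 1 else 0 := by
  have h2 := congrFun (congrFun (Matrix.mul_nonsing_inv g (gdet g hg)) c) f
  rw [Matrix.mul_apply, Matrix.one_apply] at h2
  by_cases h : c = f
  · subst h; rw [if_pos rfl] at h2; rw [if_pos rfl]
    have : ((∑ e, g c e * g⁻¹ e c : ℝ) : ℂ) = 1 := by rw [h2]; norm_num
    push_cast at this; exact this
  · rw [if_neg h] at h2; rw [if_neg h]
    have : ((∑ e, g c e * g⁻¹ e f : ℝ) : ℂ) = 0 := by rw [h2]; norm_num
    push_cast at this; exact this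

lemma gmsymm (hgs : g.IsSymm) (a b : Fin d) : gm g a b = gm g b a := by
  simp only [gm]; rw [hgs.apply]

/-- `(ĝ⁻¹σ)` as a complex vector. -/
def isv : Fin d → ℂ := fun c => ∑ e, gi g c e * sv J e

lemma hggi (hg : g.PosDef) (c : Fin d) :
    ∑ e, gm g c e * isv J g e = sv J c := by
  rw [show (∑ e, gm g c e * isv J g e) = ∑ e, gm g c e * ∑ f, gi g e f * sv J f from rfl,
    sum_swap_mul]
  calc ∑ f, (∑ e, gm g c e * gi g e f) * sv J f
      = ∑ f, (if c = f then 1 else 0) * sv J f :=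
        Finset.sum_congr rfl fun f _ => by rw [ginv g hg c f]
    _ = sv J c := by simp

lemma hggi' (hg : g.PosDef) (hgs : g.IsSymm) (e : Fin d) :
    ∑ c, gm g c e * isv J g c = sv J e := by
  rw [show (∑ c, gm g c e * isv J g c) = ∑ c, gm g e c * isv J g c from
    Finset.sum_congr rfl fun c _ => by rw [gmsymm g hgs]]
  exact hggi J g hg e

lemma hsg' : sg J g = ∑ c, sv J c * isv J g c := by
  rw [hsg, Finset.sum_congr rfl fun c _ => ?_]
  rw [isv, Finset.mul_sum]
  exact Finset.sum_congr rfl fun e _ => by ring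

lemma sum_factor (a : ℂ) (f h : Fin d → ℂ) :
    ∑ c, (-(a * f c)) * h c = -(a * ∑ c, f c * h c) := by
  rw [Finset.mul_sum, ← Finset.sum_neg_distrib]
  exact Finset.sum_congr rfl fun c _ => by ring

lemma hxg2 (a : Fin d) : xg J g a = ∑ c, Xc J a c * isv J g c := by
  rw [hxg]
  exact Finset.sum_congr rfl fun c _ => by
    rw [isv, Finset.mul_sum]; exact Finset.sum_congr rfl fun e _ => by ring

-- k·X = -α σ
lemma hkX (hJ : IsUnit J.det) (c : Fin d) :
    ∑ a, kv J a * Xc J a c = -(al J * sv J c) := by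
  linear_combination r2 J hJ c

-- k·m = 1 - α C
lemma hkm (hJ : IsUnit J.det) : ∑ a, kv J a * mv J n a = 1 - al J * Cc J n := by
  calc ∑ a, kv J a * mv J n a
      = ∑ a, (kv J a * rv J a - kv J a * ∑ c, Xc J a c * nc n c) := by
        refine Finset.sum_congr rfl fun a _ => ?_; rw [hmv]; ring
    _ = (∑ a, kv J a * rv J a) - ∑ a, kv J a * ∑ c, Xc J a c * nc n c := by
        rw [Finset.sum_sub_distrib]
    _ = (∑ a, kv J a * rv J a) - ∑ c, (∑ a, kv J a * Xc J a c) * nc n c := by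
        rw [sum_swap_mul]
    _ = 1 - al J * Cc J n := by
        have h1 : ∑ c, (∑ a, kv J a * Xc J a c) * nc n c
            = -(al J * ∑ c, sv J c * nc n c) := by
          rw [← sum_factor]
          exact Finset.sum_congr rfl fun c _ => by rw [hkX J hJ c]
        rw [h1, hCc, show (∑ a, kv J a * rv J a) = 1 - al J * tc J by
          linear_combination r1 J hJ]
        ring

-- k·(X g⁻¹ σ) = -α sgs
lemma hkxg (hJ : IsUnit J.det) : ∑ a, kv J a * xg J g a = -(al J * sg J g) := by
  calc ∑ a, kv J a * xg J g a
      = ∑ a, kv J a * ∑ c, Xc J a c * isv J g c := by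
        exact Finset.sum_congr rfl fun a _ => by rw [hxg2]
    _ = ∑ c, (∑ a, kv J a * Xc J a c) * isv J g c := by rw [sum_swap_mul]
    _ = -(al J * sg J g) := by
        have h1 : ∑ c, (∑ a, kv J a * Xc J a c) * isv J g c
            = -(al J * ∑ c, sv J c * isv J g c) := by
          rw [← sum_factor]
          exact Finset.sum_congr rfl fun c _ => by rw [hkX J hJ c]
        rw [h1, hsg']


lemma hshiftW (a : Fin d) : shiftW J θ N n g a
    = -(mv J n a * Cc J n - wick θ * (N:ℂ)^2 * xg J g a) / Dth2 J θ N n g := rfl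

lemma hlamW : lamW J θ N n g = wick θ * (N:ℂ)^2 / Dth2 J θ N n g := rfl

-- k·n' = α - C/D²
lemma hkn (hJ : IsUnit J.det) (hD : Dth2 J θ N n g ≠ 0) :
    ∑ a, kv J a * shiftW J θ N n g a = al J - Cc J n / Dth2 J θ N n g := by
  have e1 : ∑ a, kv J a * shiftW J θ N n g a
      = -(Cc J n * ∑ a, kv J a * mv J n a
          - wick θ * (N:ℂ)^2 * ∑ a, kv J a * xg J g a) / Dth2 J θ N n g := by
    calc ∑ a, kv J a * shiftW J θ N n g a
        = ∑ a, -((Cc J n * (kv J a * mv J n a)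
            - wick θ * (N:ℂ)^2 * (kv J a * xg J g a)) / Dth2 J θ N n g) :=
          Finset.sum_congr rfl fun a _ => by rw [hshiftW]; ring
      _ = _ := by
          rw [Finset.sum_neg_distrib, ← Finset.sum_div, Finset.sum_sub_distrib,
            ← Finset.mul_sum, ← Finset.mul_sum, neg_div]
  rw [e1, hkm J n hJ, hkxg J g hJ]
  rw [hD2] at hD ⊢
  field_simp
  ring

-- σ·P = -C k
lemma hsP (hJ : IsUnit J.det) (b : Fin d) :
    ∑ c, sv J c * Pt J n c b = -(Cc J n * kv J b) := by
  have e1 : ∑ c, sv J c * Pt J n c b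
      = (∑ c, sv J c * Km J c b) + (∑ c, sv J c * nc n c) * kv J b := by
    rw [Finset.sum_mul, ← Finset.sum_add_distrib]
    exact Finset.sum_congr rfl fun c _ => by simp only [Pt]; ring
  rw [e1, show (∑ c, sv J c * Km J c b) = -(tc J * kv J b) by linear_combination r4 J hJ b,
    hCc]
  ring

-- X·P = 1 - m kᵀ
lemma hXP (hJ : IsUnit J.det) (a b : Fin d) :
    ∑ c, Xc J a c * Pt J n c b = (if a = b then 1 else 0) - mv J n a * kv J b := by
  have e1 : ∑ c, Xc J a c * Pt J n c b
      = (∑ c, Xc J a c * Km J c b) + (∑ c, Xc J a c * nc n c) * kv J b := by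
    rw [Finset.sum_mul, ← Finset.sum_add_distrib]
    exact Finset.sum_congr rfl fun c _ => by simp only [Pt]; ring
  rw [e1, show (∑ c, Xc J a c * Km J c b) = (if a = b then 1 else 0) - rv J a * kv J b by
    linear_combination r6 J hJ a b, hmv]
  ring

-- X·μ = -α m
lemma hXmu (hJ : IsUnit J.det) (a : Fin d) :
    ∑ c, Xc J a c * mu J n c = -(al J * mv J n a) := by
  have e1 : ∑ c, Xc J a c * mu J n c
      = al J * (∑ c, Xc J a c * nc n c) + (∑ c, Xc J a c * bv J c) := by
    rw [Finset.mul_sum, ← Finset.sum_add_distrib]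
    exact Finset.sum_congr rfl fun c _ => by simp only [mu]; ring
  rw [e1, show (∑ c, Xc J a c * bv J c) = -(rv J a * al J) by linear_combination r5 J hJ a,
    hmv]
  ring

-- σ·μ = 1 - α C
lemma hsmu (hJ : IsUnit J.det) : ∑ c, sv J c * mu J n c = 1 - al J * Cc J n := by
  have e1 : ∑ c, sv J c * mu J n c
      = al J * (∑ c, sv J c * nc n c) + (∑ c, sv J c * bv J c) := by
    rw [Finset.mul_sum, ← Finset.sum_add_distrib]
    exact Finset.sum_congr rfl fun c _ => by simp only [mu]; ring
  rw [e1, show (∑ c, sv J c * bv J c) = 1 - tc J * al J by linear_combination r3 J hJ, hCc]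
  ring

/-- `P n'`. -/
def Pn : Fin d → ℂ := fun c => ∑ e, Pt J n c e * shiftW J θ N n g e

-- X (P n') = n' - (k·n') m
lemma hXPn (hJ : IsUnit J.det) (a : Fin d) :
    ∑ c, Xc J a c * Pn J θ N n g c
      = shiftW J θ N n g a - mv J n a * ∑ e, kv J e * shiftW J θ N n g e := by
  rw [show (∑ c, Xc J a c * Pn J θ N n g c)
      = ∑ e, (∑ c, Xc J a c * Pt J n c e) * shiftW J θ N n g e from sum_swap_mul _ _ _]
  have e1 : ∀ e, (∑ c, Xc J a c * Pt J n c e) * shiftW J θ N n g e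
      = (if a = e then 1 else 0) * shiftW J θ N n g e
        - mv J n a * (kv J e * shiftW J θ N n g e) := by
    intro e; rw [hXP J n hJ a e]; ring
  rw [Finset.sum_congr rfl fun e _ => e1 e, Finset.sum_sub_distrib, ← Finset.mul_sum]
  congr 1
  simp

-- σ·(P n') = -C (k·n')
lemma hsPn (hJ : IsUnit J.det) :
    ∑ c, sv J c * Pn J θ N n g c
      = -(Cc J n * ∑ e, kv J e * shiftW J θ N n g e) := by
  rw [show (∑ c, sv J c * Pn J θ N n g c)
      = ∑ e, (∑ c, sv J c * Pt J n c e) * shiftW J θ N n g e from sum_swap_mul _ _ _]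
  have e1 : ∀ e, (∑ c, sv J c * Pt J n c e) * shiftW J θ N n g e
      = -(Cc J n * (kv J e * shiftW J θ N n g e)) := by
    intro e; rw [hsP J n hJ e]; ring
  rw [Finset.sum_congr rfl fun e _ => e1 e, Finset.sum_neg_distrib, ← Finset.mul_sum]


/-- `v = P n' - μ`. -/
def vv : Fin d → ℂ := fun c => Pn J θ N n g c - mu J n c
/-- target `t = (w/D²) ĝ⁻¹σ`. -/
def tv : Fin d → ℂ := fun c => (wick θ * (N:ℂ)^2 / Dth2 J θ N n g) * isv J g c

lemma hXvt (hJ : IsUnit J.det) (hD : Dth2 J θ N n g ≠ 0) (a : Fin d) :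
    ∑ c, Xc J a c * (vv J θ N n g c - tv J θ N n g c) = 0 := by
  have e1 : ∑ c, Xc J a c * (vv J θ N n g c - tv J θ N n g c)
      = (∑ c, Xc J a c * Pn J θ N n g c) - (∑ c, Xc J a c * mu J n c)
        - (wick θ * (N:ℂ)^2 / Dth2 J θ N n g) * ∑ c, Xc J a c * isv J g c := by
    rw [Finset.mul_sum, ← Finset.sum_sub_distrib, ← Finset.sum_sub_distrib]
    exact Finset.sum_congr rfl fun c _ => by simp only [vv, tv]; ring
  rw [e1, hXPn J θ N n g hJ a, hkn J θ N n g hJ hD, hXmu J n hJ a, ← hxg2 J g a,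
    hshiftW J θ N n g a]
  field_simp
  ring

lemma hsvt (hJ : IsUnit J.det) (hD : Dth2 J θ N n g ≠ 0) :
    ∑ c, sv J c * (vv J θ N n g c - tv J θ N n g c) = 0 := by
  have e1 : ∑ c, sv J c * (vv J θ N n g c - tv J θ N n g c)
      = (∑ c, sv J c * Pn J θ N n g c) - (∑ c, sv J c * mu J n c)
        - (wick θ * (N:ℂ)^2 / Dth2 J θ N n g) * ∑ c, sv J c * isv J g c := by
    rw [Finset.mul_sum, ← Finset.sum_sub_distrib, ← Finset.sum_sub_distrib]
    exact Finset.sum_congr rfl fun c _ => by simp only [vv, tv]; ring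
  rw [e1, hsPn J θ N n g hJ, hkn J θ N n g hJ hD, hsmu J n hJ, ← hsg' J g]
  rw [hD2] at hD ⊢
  field_simp
  ring

lemma mapMul {m : ℕ} (A B : Matrix (Fin m) (Fin m) ℝ) :
    (A * B).map Complex.ofReal = A.map Complex.ofReal * B.map Complex.ofReal := by
  ext i j
  simp only [Matrix.map_apply, Matrix.mul_apply]
  push_cast
  rfl

lemma mapOne {m : ℕ} : (1 : Matrix (Fin m) (Fin m) ℝ).map Complex.ofReal = 1 := by
  ext i j
  simp [Matrix.map_apply, Matrix.one_apply, apply_ite]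

lemma hKJc (hJ : IsUnit J.det) :
    (J⁻¹.map Complex.ofReal) * (J.map Complex.ofReal) = 1 := by
  rw [← mapMul, Matrix.nonsing_inv_mul J hJ, mapOne]

lemma hJKc (hJ : IsUnit J.det) :
    (J.map Complex.ofReal) * (J⁻¹.map Complex.ofReal) = 1 := by
  rw [← mapMul, Matrix.mul_nonsing_inv J hJ, mapOne]

-- v = t
lemma hveq (hJ : IsUnit J.det) (hD : Dth2 J θ N n g ≠ 0) (c : Fin d) :
    vv J θ N n g c = tv J θ N n g c := by
  set u : Fin (d+1) → ℂ :=
    Fin.cases 0 (fun e => vv J θ N n g e - tv J θ N n g e) with hu_def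
  have hu : (J.map Complex.ofReal).mulVec u = 0 := by
    funext p
    refine Fin.cases ?_ ?_ p
    · show ∑ q, (J.map Complex.ofReal) 0 q * u q = 0
      rw [Fin.sum_univ_succ]
      simp only [hu_def, Fin.cases_zero, Fin.cases_succ, mul_zero, zero_add]
      exact hsvt J θ N n g hJ hD
    · intro a
      show ∑ q, (J.map Complex.ofReal) a.succ q * u q = 0
      rw [Fin.sum_univ_succ]
      simp only [hu_def, Fin.cases_zero, Fin.cases_succ, mul_zero, zero_add]
      exact hXvt J θ N n g hJ hD a
  have hu0 : u = 0 := by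
    calc u = (1 : Matrix (Fin (d+1)) (Fin (d+1)) ℂ).mulVec u := (Matrix.one_mulVec u).symm
      _ = ((J⁻¹.map Complex.ofReal) * (J.map Complex.ofReal)).mulVec u := by
          rw [hKJc J hJ]
      _ = (J⁻¹.map Complex.ofReal).mulVec ((J.map Complex.ofReal).mulVec u) := by
          rw [← Matrix.mulVec_mulVec]
      _ = 0 := by rw [hu, Matrix.mulVec_zero]
  have := congrFun hu0 c.succ
  simp only [hu_def, Fin.cases_succ, Pi.zero_apply] at this
  exact sub_eq_zero.mp this

lemma ADM_bilin (ε lam : ℂ) (ncc : Fin d → ℂ) (G : Matrix (Fin d) (Fin d) ℂ)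
    (hGs : ∀ a b, G a b = G b a) (u u' : Fin (d+1) → ℂ) :
    ∑ q, (∑ p, u p * ADM ε lam ncc G p q) * u' q
      = ε * lam * (u 0 * u' 0)
        + ∑ c, ∑ e, G c e * (u c.succ + ncc c * u 0) * (u' e.succ + ncc e * u' 0) := by
  simp only [Fin.sum_univ_succ, ADM, Matrix.of_apply, Fin.cases_zero, Fin.cases_succ]
  simp only [Finset.mul_sum, Finset.sum_mul, mul_add, add_mul, Finset.sum_add_distrib]
  have h2 : ∑ y : Fin d, ∑ x : Fin d, u 0 * u' 0 * G x y * ncc x * ncc y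
      = ∑ x : Fin d, ∑ y : Fin d, G x y * ncc x * u 0 * ncc y * u' 0 := by
    rw [Finset.sum_comm]
    exact Finset.sum_congr rfl fun x _ => Finset.sum_congr rfl fun y _ => by ring
  have h3 : ∑ x : Fin d, ∑ i : Fin d, u i.succ * G i x * u' x.succ
      = ∑ x : Fin d, ∑ y : Fin d, G x y * u x.succ * u' y.succ := by
    rw [Finset.sum_comm]
    exact Finset.sum_congr rfl fun x _ => Finset.sum_congr rfl fun y _ => by ring
  have h4 : ∑ x : Fin d, ∑ y : Fin d, u x.succ * G x y * ncc y * u' 0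
      = ∑ x : Fin d, ∑ y : Fin d, G x y * u x.succ * ncc y * u' 0 :=
    Finset.sum_congr rfl fun x _ => Finset.sum_congr rfl fun y _ => by ring
  have h5 : ∑ x : Fin d, ∑ y : Fin d, u 0 * G x y * ncc y * u' x.succ
      = ∑ x : Fin d, ∑ y : Fin d, G x y * ncc x * u 0 * u' y.succ := by
    conv_rhs => rw [Finset.sum_comm]
    exact Finset.sum_congr rfl fun x _ => Finset.sum_congr rfl fun y _ => by
      rw [hGs y x]; ring
  have h6 : ∑ x : Fin d, ∑ y : Fin d, u 0 * u' 0 * G x y * ncc x * ncc y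
      = ∑ x : Fin d, ∑ y : Fin d, u 0 * u' 0 * G y x * ncc y * ncc x := Finset.sum_comm
  linear_combination (norm := ring_nf) h2 + h3 + h4 + h5 + h6

lemma sum_swap_mul3 (s : Fin d → ℂ) (T : Fin d → Fin d → Fin d → ℂ) :
    ∑ e, (∑ c, ∑ f, T c f e) * s e = ∑ c, ∑ f, ∑ e, T c f e * s e := by
  simp_rw [Finset.sum_mul]
  rw [Finset.sum_comm]
  exact Finset.sum_congr rfl fun c _ => Finset.sum_comm

lemma hghW (a b : Fin d) : ghW J θ N n g a b
    = (∑ c, ∑ e, gm g c e * Pt J n c a * Pt J n e b)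
      - wick θ * (N:ℂ)^2 * kv J a * kv J b := by
  simp only [ghW, Matrix.of_apply]
  push_cast
  congr 1
  refine Finset.sum_congr rfl fun c _ => Finset.sum_congr rfl fun e _ => ?_
  simp only [gm, Pt, Km, kv, nc]
  push_cast
  ring

lemma hPn_eq (hJ : IsUnit J.det) (hD : Dth2 J θ N n g ≠ 0) (c : Fin d) :
    Pn J θ N n g c = mu J n c + tv J θ N n g c := by
  have h := hveq J θ N n g hJ hD c
  simp only [vv] at h
  linear_combination h

lemma hgh_n (hgs : g.IsSymm) (hg : g.PosDef) (hJ : IsUnit J.det)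
    (hD : Dth2 J θ N n g ≠ 0) (b : Fin d) :
    ∑ e, ghW J θ N n g b e * shiftW J θ N n g e
      = (∑ c, ∑ f, gm g c f * Pt J n c b * mu J n f)
        - wick θ * (N:ℂ)^2 * al J * kv J b := by
  have step1 : ∑ e, ghW J θ N n g b e * shiftW J θ N n g e
      = (∑ e, (∑ c, ∑ f, gm g c f * Pt J n c b * Pt J n f e) * shiftW J θ N n g e)
        - wick θ * (N:ℂ)^2 * kv J b * (∑ e, kv J e * shiftW J θ N n g e) := by
    rw [Finset.mul_sum, ← Finset.sum_sub_distrib]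
    exact Finset.sum_congr rfl fun e _ => by rw [hghW J θ N n g b e]; ring
  rw [step1, sum_swap_mul3]
  have step2 : ∀ c f, ∑ e, gm g c f * Pt J n c b * Pt J n f e * shiftW J θ N n g e
      = gm g c f * Pt J n c b * Pn J θ N n g f := fun c f => by
    rw [Pn, Finset.mul_sum]
    exact Finset.sum_congr rfl fun e _ => by ring
  rw [Finset.sum_congr rfl fun c _ => Finset.sum_congr rfl fun f _ => step2 c f]
  have step3 : ∀ c, ∑ f, gm g c f * Pt J n c b * Pn J θ N n g f
      = (∑ f, gm g c f * Pt J n c b * mu J n f)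
        + (wick θ * (N:ℂ)^2 / Dth2 J θ N n g) * (sv J c * Pt J n c b) := by
    intro c
    have e4 : ∑ f, gm g c f * Pt J n c b * tv J θ N n g f
        = (Pt J n c b * (wick θ * (N:ℂ)^2 / Dth2 J θ N n g)) * ∑ f, gm g c f * isv J g f := by
      rw [Finset.mul_sum]
      exact Finset.sum_congr rfl fun f _ => by simp only [tv]; ring
    calc ∑ f, gm g c f * Pt J n c b * Pn J θ N n g f
        = ∑ f, (gm g c f * Pt J n c b * mu J n f + gm g c f * Pt J n c b * tv J θ N n g f) := by
          refine Finset.sum_congr rfl fun f _ => ?_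
          rw [hPn_eq J θ N n g hJ hD f]; ring
      _ = (∑ f, gm g c f * Pt J n c b * mu J n f) + ∑ f, gm g c f * Pt J n c b * tv J θ N n g f := by
          rw [Finset.sum_add_distrib]
      _ = _ := by rw [e4, hggi J g hg c]; ring
  rw [Finset.sum_congr rfl fun c _ => step3 c, Finset.sum_add_distrib, ← Finset.mul_sum,
    hsP J n hJ b, hkn J θ N n g hJ hD]
  field_simp
  ring


lemma hgh_nn (hgs : g.IsSymm) (hg : g.PosDef) (hJ : IsUnit J.det)
    (hD : Dth2 J θ N n g ≠ 0) :
    ∑ a, ∑ b, ghW J θ N n g a b * shiftW J θ N n g a * shiftW J θ N n g b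
      = (∑ c, ∑ e, gm g c e * mu J n c * mu J n e)
        + wick θ * (N:ℂ)^2 / Dth2 J θ N n g - wick θ * (N:ℂ)^2 * al J * al J := by
  have step1 : ∑ a, ∑ b, ghW J θ N n g a b * shiftW J θ N n g a * shiftW J θ N n g b
      = ∑ a, (∑ b, ghW J θ N n g a b * shiftW J θ N n g b) * shiftW J θ N n g a := by
    refine Finset.sum_congr rfl fun a _ => ?_
    rw [Finset.sum_mul]
    exact Finset.sum_congr rfl fun b _ => by ring
  have hsub : (∑ a, (∑ b, ghW J θ N n g a b * shiftW J θ N n g b) * shiftW J θ N n g a)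
      = ∑ a, ((∑ c, ∑ f, gm g c f * Pt J n c a * mu J n f)
          - wick θ * (N:ℂ)^2 * al J * kv J a) * shiftW J θ N n g a :=
    Finset.sum_congr rfl fun a _ => by rw [hgh_n J θ N n g hgs hg hJ hD a]
  rw [step1, hsub]
  have step2 : ∑ a, ((∑ c, ∑ f, gm g c f * Pt J n c a * mu J n f)
        - wick θ * (N:ℂ)^2 * al J * kv J a) * shiftW J θ N n g a
      = (∑ a, (∑ c, ∑ f, gm g c f * Pt J n c a * mu J n f) * shiftW J θ N n g a)
        - wick θ * (N:ℂ)^2 * al J * ∑ a, kv J a * shiftW J θ N n g a := by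
    rw [Finset.mul_sum, ← Finset.sum_sub_distrib]
    exact Finset.sum_congr rfl fun a _ => by ring
  rw [step2, sum_swap_mul3]
  have step3 : ∀ c f, ∑ a, gm g c f * Pt J n c a * mu J n f * shiftW J θ N n g a
      = gm g c f * mu J n f * Pn J θ N n g c := fun c f => by
    rw [Pn, Finset.mul_sum]
    exact Finset.sum_congr rfl fun a _ => by ring
  rw [Finset.sum_congr rfl fun c _ => Finset.sum_congr rfl fun f _ => step3 c f]
  have step4 : ∑ c, ∑ f, gm g c f * mu J n f * Pn J θ N n g c
      = (∑ c, ∑ e, gm g c e * mu J n c * mu J n e)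
        + (wick θ * (N:ℂ)^2 / Dth2 J θ N n g) * (1 - al J * Cc J n) := by
    have split : ∑ c, ∑ f, gm g c f * mu J n f * Pn J θ N n g c
        = (∑ c, ∑ f, gm g c f * mu J n c * mu J n f)
          + ∑ c, ∑ f, gm g c f * mu J n f * tv J θ N n g c := by
      rw [← Finset.sum_add_distrib]
      refine Finset.sum_congr rfl fun c _ => ?_
      rw [← Finset.sum_add_distrib]
      refine Finset.sum_congr rfl fun f _ => ?_
      rw [hPn_eq J θ N n g hJ hD c]; ring
    rw [split]
    congr 1
    rw [Finset.sum_comm]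
    have inner : ∀ f, ∑ c, gm g c f * mu J n f * tv J θ N n g c
        = (wick θ * (N:ℂ)^2 / Dth2 J θ N n g) * (mu J n f * sv J f) := by
      intro f
      have e4 : ∑ c, gm g c f * mu J n f * tv J θ N n g c
          = (mu J n f * (wick θ * (N:ℂ)^2 / Dth2 J θ N n g)) * ∑ c, gm g c f * isv J g c := by
        rw [Finset.mul_sum]
        exact Finset.sum_congr rfl fun c _ => by simp only [tv]; ring
      rw [e4, hggi' J g hg hgs f]; ring
    rw [Finset.sum_congr rfl fun f _ => inner f, ← Finset.mul_sum]
    congr 1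
    rw [show (∑ f, mu J n f * sv J f) = ∑ f, sv J f * mu J n f from
      Finset.sum_congr rfl fun f _ => by ring, hsmu J n hJ]
  rw [step4, hkn J θ N n g hJ hD]
  field_simp
  ring


lemma key (hgs : g.IsSymm) (hg : g.PosDef) (hJ : IsUnit J.det)
    (hD : Dth2 J θ N n g ≠ 0) :
    ADM (-1 : ℂ) (lamW J θ N n g) (shiftW J θ N n g) (ghW J θ N n g)
      = ((J⁻¹).map Complex.ofReal)ᵀ
          * ADM (-1:ℂ) (wick θ * (N:ℂ)^2) (fun a => (n a : ℂ)) (g.map Complex.ofReal)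
          * ((J⁻¹).map Complex.ofReal) := by
  have hGs : ∀ a b, (g.map Complex.ofReal) a b = (g.map Complex.ofReal) b a := by
    intro a b; simp only [Matrix.map_apply]; rw [hgs.apply]
  have hentry : ∀ i j, (((J⁻¹).map Complex.ofReal)ᵀ
        * ADM (-1:ℂ) (wick θ * (N:ℂ)^2) (fun a => (n a : ℂ)) (g.map Complex.ofReal)
        * ((J⁻¹).map Complex.ofReal)) i j
      = ∑ q, (∑ p, (fun p => ((J⁻¹).map Complex.ofReal) p i) p
          * ADM (-1:ℂ) (wick θ * (N:ℂ)^2) (fun a => (n a : ℂ)) (g.map Complex.ofReal) p q)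
          * (fun q => ((J⁻¹).map Complex.ofReal) q j) q := by
    intro i j
    rw [Matrix.mul_apply]
    refine Finset.sum_congr rfl fun q _ => ?_
    simp only [Matrix.mul_apply, Matrix.transpose_apply]
  ext i j
  rw [hentry i j,
    ADM_bilin (-1:ℂ) (wick θ * (N:ℂ)^2) (fun a => (n a : ℂ)) (g.map Complex.ofReal) hGs]
  simp only [Matrix.map_apply, Matrix.transpose_apply]
  refine Fin.cases ?_ (fun a => ?_) i <;> [refine Fin.cases ?_ (fun b => ?_) j;
    refine Fin.cases ?_ (fun b => ?_) j]
  · -- (0,0)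
    simp only [ADM, Matrix.of_apply, Fin.cases_zero, Fin.cases_succ]
    have conv1 : ∑ c, ∑ e, (g c e : ℂ)
          * ((J⁻¹ c.succ 0 : ℂ) + (n c : ℂ) * (J⁻¹ 0 0 : ℂ))
          * ((J⁻¹ e.succ 0 : ℂ) + (n e : ℂ) * (J⁻¹ 0 0 : ℂ))
        = ∑ c, ∑ e, gm g c e * mu J n c * mu J n e :=
      Finset.sum_congr rfl fun c _ => Finset.sum_congr rfl fun e _ => by
        simp only [gm, mu, al, bv, nc]; ring
    rw [conv1, hgh_nn J θ N n g hgs hg hJ hD, hlamW]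
    show (-1 : ℂ) * (wick θ * (N:ℂ)^2 / Dth2 J θ N n g) + _ = _
    rw [show (J⁻¹ 0 0 : ℂ) = al J from rfl]
    ring
  · -- (0, succ b)
    simp only [ADM, Matrix.of_apply, Fin.cases_zero, Fin.cases_succ]
    have conv1 : ∑ c, ∑ e, (g c e : ℂ)
          * ((J⁻¹ c.succ 0 : ℂ) + (n c : ℂ) * (J⁻¹ 0 0 : ℂ))
          * ((J⁻¹ e.succ b.succ : ℂ) + (n e : ℂ) * (J⁻¹ 0 b.succ : ℂ))
        = ∑ c, ∑ e, gm g c e * mu J n c * Pt J n e b :=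
      Finset.sum_congr rfl fun c _ => Finset.sum_congr rfl fun e _ => by
        simp only [gm, mu, al, bv, nc, Pt, Km, KJ, kv, kJ, Matrix.of_apply]; ring
    have flip : ∑ c, ∑ f, gm g c f * Pt J n c b * mu J n f
        = ∑ c, ∑ e, gm g c e * mu J n c * Pt J n e b := by
      rw [Finset.sum_comm]
      exact Finset.sum_congr rfl fun c _ => Finset.sum_congr rfl fun e _ => by
        rw [gmsymm g hgs e c]; ring
    rw [conv1, ← flip, hgh_n J θ N n g hgs hg hJ hD b]
    rw [show (J⁻¹ 0 0 : ℂ) = al J from rfl, show (J⁻¹ 0 b.succ : ℂ) = kv J b from rfl]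
    ring
  · -- (succ a, 0)
    simp only [ADM, Matrix.of_apply, Fin.cases_zero, Fin.cases_succ]
    have conv1 : ∑ c, ∑ e, (g c e : ℂ)
          * ((J⁻¹ c.succ a.succ : ℂ) + (n c : ℂ) * (J⁻¹ 0 a.succ : ℂ))
          * ((J⁻¹ e.succ 0 : ℂ) + (n e : ℂ) * (J⁻¹ 0 0 : ℂ))
        = ∑ c, ∑ f, gm g c f * Pt J n c a * mu J n f :=
      Finset.sum_congr rfl fun c _ => Finset.sum_congr rfl fun e _ => by
        simp only [gm, mu, al, bv, nc, Pt, Km, KJ, kv, kJ, Matrix.of_apply]; ring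
    rw [conv1, hgh_n J θ N n g hgs hg hJ hD a]
    rw [show (J⁻¹ 0 0 : ℂ) = al J from rfl, show (J⁻¹ 0 a.succ : ℂ) = kv J a from rfl]
    ring
  · -- (succ a, succ b)
    simp only [ADM, Matrix.of_apply, Fin.cases_zero, Fin.cases_succ]
    have conv1 : ∑ c, ∑ e, (g c e : ℂ)
          * ((J⁻¹ c.succ a.succ : ℂ) + (n c : ℂ) * (J⁻¹ 0 a.succ : ℂ))
          * ((J⁻¹ e.succ b.succ : ℂ) + (n e : ℂ) * (J⁻¹ 0 b.succ : ℂ))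
        = ∑ c, ∑ e, gm g c e * Pt J n c a * Pt J n e b :=
      Finset.sum_congr rfl fun c _ => Finset.sum_congr rfl fun e _ => by
        simp only [gm, mu, al, bv, nc, Pt, Km, KJ, kv, kJ, Matrix.of_apply]; ring
    rw [conv1, hghW J θ N n g a b]
    rw [show (J⁻¹ 0 a.succ : ℂ) = kv J a from rfl, show (J⁻¹ 0 b.succ : ℂ) = kv J b from rfl]
    ring

end LWCaux

/-- Proposition 1 (matrix form): covariance of the lapse-Wick-rotated ADM metric
under foliation-changing diffeomorphisms. -/
theorem lapse_wick_covariance (d : ℕ) (hd : 1 ≤ d) (θ : ℝ)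
    (N : ℝ) (hN : 0 < N) (n : Fin d → ℝ)
    (g : Matrix (Fin d) (Fin d) ℝ) (hgs : g.IsSymm) (hg : g.PosDef)
    (J : Matrix (Fin (d+1)) (Fin (d+1)) ℝ) (hJ : IsUnit J.det)
    (hD : Dth2 J θ N n g ≠ 0) :
    (J.map Complex.ofReal)ᵀ
        * ADM (-1 : ℂ) (lamW J θ N n g) (shiftW J θ N n g) (ghW J θ N n g)
        * (J.map Complex.ofReal)
      = ADM (-1 : ℂ) (wick θ * (N:ℂ)^2) (fun a => (n a : ℂ)) (g.map Complex.ofReal) := by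
  rw [LWCaux.key J θ N n g hgs hg hJ hD]
  have h1 := LWCaux.hKJc J hJ
  calc (J.map Complex.ofReal)ᵀ
        * (((J⁻¹).map Complex.ofReal)ᵀ
            * ADM (-1:ℂ) (wick θ * (N:ℂ)^2) (fun a => (n a : ℂ)) (g.map Complex.ofReal)
            * ((J⁻¹).map Complex.ofReal))
        * (J.map Complex.ofReal)
      = (((J⁻¹).map Complex.ofReal) * (J.map Complex.ofReal))ᵀ
          * ADM (-1:ℂ) (wick θ * (N:ℂ)^2) (fun a => (n a : ℂ)) (g.map Complex.ofReal)
          * (((J⁻¹).map Complex.ofReal) * (J.map Complex.ofReal)) := by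
        rw [Matrix.transpose_mul]
        noncomm_ring
    _ = _ := by
        rw [h1, Matrix.transpose_one, Matrix.one_mul, Matrix.mul_one]
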